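/- Adaptive power method fixed point: let A = diag(2,1) and suppose the iteration Y^{i} = dual_∞(A X^{i−1}), X^{i} = dual_2(A^⊤ Y^{i}) reaches X^1 = ±(0,1)^⊤. Then X^i = Y^i = ±(0,1)^⊤ for all i ≥ 1, and the returned estimate ||A X^m||_∞ = 1, whereas ||A||_{2→∞} = 2. -/
import Mathlib


open scoped BigOperators

/-- `dual₂(x) = x / ‖x‖₂` on ℝ². -/
noncomputable def dualTwo (x : Fin 2 → ℝ) : Fin 2 → ℝ :=
  (Real.sqrt ((x 0) ^ 2 + (x 1) ^ 2))⁻¹ • x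

/-- `dual_∞(x) = |I|⁻¹ sign(x) ⊙ 1_I` on ℝ², where
`I = {i : |x_i| = ‖x‖_∞}`. -/
noncomputable def dualInf (x : Fin 2 → ℝ) : Fin 2 → ℝ := fun i =>
  if |x i| = max |x 0| |x 1| then
    Real.sign (x i) /
      ((Finset.univ.filter fun j : Fin 2 => |x j| = max |x 0| |x 1|).card : ℝ)
  else 0

/-- The matrix `A = diag(2,1)`. -/
noncomputable def Adiag : Matrix (Fin 2) (Fin 2) ℝ := Matrix.diagonal ![2, 1]

lemma mulVec0s (s : ℝ) : Adiag.mulVec ![0, s] = ![0, s] := by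
  funext i
  fin_cases i <;> simp [Adiag, Matrix.mulVec, dotProduct, Fin.sum_univ_two, Matrix.diagonal]

lemma mulVecT0s (s : ℝ) : Adiag.transpose.mulVec ![0, s] = ![0, s] := by
  funext i
  fin_cases i <;> simp [Adiag, Matrix.mulVec, dotProduct, Fin.sum_univ_two, Matrix.diagonal, Matrix.transpose]

lemma dualInf0s (s : ℝ) (hs : s = 1 ∨ s = -1) : dualInf ![0, s] = ![0, s] := by
  have habs : |s| = 1 := by rcases hs with h | h <;> simp [h]
  have hmax : max |(![0, s] : Fin 2 → ℝ) 0| |(![0, s] : Fin 2 → ℝ) 1| = 1 := by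
    simp [habs]
  have hfilter : (Finset.univ.filter fun j : Fin 2 =>
      |(![0, s] : Fin 2 → ℝ) j| = 1) = {1} := by
    ext j
    fin_cases j <;> simp [habs]
  have hsign : Real.sign s = s := by
    rcases hs with h | h <;> simp [h, Real.sign_one, Real.sign_neg]
  funext i
  fin_cases i <;> simp only [dualInf, hmax, hfilter] <;> simp [habs, hsign]

lemma dualTwo0s (s : ℝ) (hs : s = 1 ∨ s = -1) : dualTwo ![0, s] = ![0, s] := by
  have : s ^ 2 = 1 := by rcases hs with h | h <;> simp [h]
  funext i
  fin_cases i <;> simp [dualTwo, this]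

/-- Adaptive power method fixed point for `A = diag(2,1)`: if the iteration
`Yⁱ = dual_∞(A Xⁱ⁻¹)`, `Xⁱ = dual₂(Aᵀ Yⁱ)` reaches `X¹ = ±(0,1)ᵀ`, then
`Xⁱ = Yⁱ = ±(0,1)ᵀ` for all `i ≥ 1`, the returned estimate `‖A Xᵐ‖_∞ = 1`,
whereas `‖A‖_{2→∞} = 2`. -/
theorem adaptive_power_method_trapped (s : ℝ) (hs : s = 1 ∨ s = -1)
    (Xseq : ℕ → Fin 2 → ℝ)
    (hX1 : Xseq 1 = ![0, s])
    (hrec : ∀ i, 1 ≤ i →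
      Xseq (i + 1) = dualTwo (Adiag.transpose.mulVec (dualInf (Adiag.mulVec (Xseq i))))) :
    (∀ i, 1 ≤ i → Xseq i = ![0, s]) ∧
    (∀ i, 1 ≤ i → dualInf (Adiag.mulVec (Xseq i)) = ![0, s]) ∧
    (∀ m, 1 ≤ m → max |Adiag.mulVec (Xseq m) 0| |Adiag.mulVec (Xseq m) 1| = 1) ∧
    (⨆ i : Fin 2, Real.sqrt (∑ j, (Adiag i j) ^ 2)) = 2 := by
  have habs : |s| = 1 := by rcases hs with h | h <;> simp [h]
  have hXall : ∀ i, 1 ≤ i → Xseq i = ![0, s] := by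
    intro i hi
    induction i, hi using Nat.le_induction with
    | base => exact hX1
    | succ n hn ih =>
      rw [hrec n hn, ih, mulVec0s, dualInf0s s hs, mulVecT0s, dualTwo0s s hs]
  refine ⟨hXall, ?_, ?_, ?_⟩
  · intro i hi; rw [hXall i hi, mulVec0s, dualInf0s s hs]
  · intro m hm
    rw [hXall m hm, mulVec0s]
    simp [habs]
  · have hval0 : Real.sqrt (∑ j, (Adiag 0 j) ^ 2) = 2 := by
      have : (∑ j, (Adiag 0 j) ^ 2) = 4 := by
        simp [Adiag, Fin.sum_univ_two, Matrix.diagonal]; norm_num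
      rw [this, show (4 : ℝ) = 2 ^ 2 by norm_num, Real.sqrt_sq (by norm_num)]
    have hval1 : Real.sqrt (∑ j, (Adiag 1 j) ^ 2) = 1 := by
      have : (∑ j, (Adiag 1 j) ^ 2) = 1 := by
        simp [Adiag, Fin.sum_univ_two, Matrix.diagonal]
      rw [this, Real.sqrt_one]
    apply le_antisymm
    · apply ciSup_le
      intro i
      fin_cases i
      · exact le_of_eq hval0
      · rw [show ((⟨1, by norm_num⟩ : Fin 2) : Fin 2) = 1 from rfl, hval1]; norm_num
    · calc (2 : ℝ) = Real.sqrt (∑ j, (Adiag 0 j) ^ 2) := hval0.symm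
        _ ≤ _ := le_ciSup (Set.Finite.bddAbove (Set.finite_range fun i : Fin 2 => Real.sqrt (∑ j, (Adiag i j) ^ 2))) 0
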